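/- arXiv:2502.06547 — 2 statements merged into one kernel-verified Lean document; each statement's English description precedes it below -/
import Mathlib

section
/- Assume the compatibility condition Π_L Π_G = Π_G Π_L and that R is continuously differentiable with locally Lipschitz gradient. If A : [0,∞) → L is a differentiable curve satisfying the augmented gradient-flow equation A'(t) = −Π_L ∇R^aug(A(t)) for all t ≥ 0 and A(0) ∈ E, then A(t) ∈ E for all t ≥ 0; that is, the equivariant subspace E is an invariant set of the augmented dynamics. -/
open MeasureTheory InnerProductSpace RealInnerProductSpace

noncomputable section

/-- The fixed-point subspace `H_G = {v : ρ(g) v = v for all g}` of an orthogonal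
representation `ρ : G → O(V)`. -/
def fixedSubmodule {G V : Type*} [Group G] [NormedAddCommGroup V] [InnerProductSpace ℝ V]
    (ρ : G →* (V ≃ₗᵢ[ℝ] V)) : Submodule ℝ V where
  carrier := {v | ∀ g : G, ρ g v = v}
  add_mem' := by
    intro a b ha hb g
    simp [map_add, ha g, hb g]
  zero_mem' := by
    intro g
    simp
  smul_mem' := by
    intro c a ha g
    rw [_root_.map_smul, ha g]

/-- The orthogonal projection onto a subspace `K`, as a map `V → V`. -/
def projSub {V : Type*} [NormedAddCommGroup V] [InnerProductSpace ℝ V] (K : Submodule ℝ V)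
    [K.HasOrthogonalProjection] : V →L[ℝ] V :=
  K.subtypeL.comp (K.orthogonalProjectionOnto)

/-- The augmented risk `R^aug(A) = ∫_G R(ρ(g) A) dμ(g)`. -/
def augRisk {G V : Type*} [Group G] [MeasurableSpace G]
    [NormedAddCommGroup V] [InnerProductSpace ℝ V]
    (μ : Measure G) (ρ : G →* (V ≃ₗᵢ[ℝ] V)) (R : V → ℝ) : V → ℝ :=
  fun A => ∫ g, R (ρ g A) ∂μ

/-- The Hessian of `f : V → ℝ` at `A`, regarded as a linear map `V → V`
(the derivative of the gradient field). -/
def hess {V : Type*} [NormedAddCommGroup V] [InnerProductSpace ℝ V] [CompleteSpace V]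
    (f : V → ℝ) (A : V) : V →L[ℝ] V :=
  fderiv ℝ (gradient f) A

/-! ### Auxiliary lemmas -/

open scoped NNReal ENNReal Topology

set_option linter.unusedSectionVars false

/-- A locally Lipschitz map is Lipschitz on every compact set. -/
lemma LocallyLipschitz.exists_lipschitzOnWith_isCompact {α β : Type*} [MetricSpace α]
    [MetricSpace β] {f : α → β} (hf : LocallyLipschitz f) {s : Set α} (hs : IsCompact s) :
    ∃ K : ℝ≥0, LipschitzOnWith K f s := by
  have hcont := hf.continuous
  choose K t ht hl using hf
  have hball : ∀ x : α, ∃ ε > 0, Metric.ball x (2 * ε) ⊆ t x := by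
    intro x
    obtain ⟨δ, δpos, hδ⟩ := Metric.mem_nhds_iff.1 (ht x)
    exact ⟨δ / 2, by positivity, by rw [show 2 * (δ / 2) = δ by ring]; exact hδ⟩
  choose ε εpos hε using hball
  rcases s.eq_empty_or_nonempty with rfl | hsne
  · exact ⟨1, by simp [lipschitzOnWith_empty]⟩
  obtain ⟨F, hFs, hcover⟩ := hs.elim_nhds_subcover (fun x => Metric.ball x (ε x))
    (fun x _ => Metric.ball_mem_nhds x (εpos x))
  have hFne : F.Nonempty := by
    obtain ⟨x₀, hx₀⟩ := hsne
    obtain ⟨i, hi, -⟩ := Set.mem_iUnion₂.1 (hcover hx₀)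
    exact ⟨i, hi⟩
  set δ : ℝ := F.inf' hFne ε with hδdef
  have hδpos : 0 < δ := (Finset.lt_inf'_iff hFne).2 fun i _ => εpos i
  obtain ⟨c, r, hr⟩ : ∃ c r, f '' s ⊆ Metric.closedBall c r := by
    obtain ⟨x₀, hx₀⟩ := hsne
    obtain ⟨r, hr⟩ := (Metric.isBounded_iff_subset_closedBall (f x₀)).1
      (hs.image hcont).isBounded
    exact ⟨f x₀, r, hr⟩
  set M : ℝ := 2 * max r 0 with hMdef
  have hM : ∀ x ∈ s, ∀ y ∈ s, dist (f x) (f y) ≤ M := by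
    intro x hx y hy
    have h1 := hr ⟨x, hx, rfl⟩
    have h2 := hr ⟨y, hy, rfl⟩
    calc dist (f x) (f y) ≤ dist (f x) c + dist (f y) c := dist_triangle_right _ _ _
      _ ≤ max r 0 + max r 0 := add_le_add
          (le_trans (Metric.mem_closedBall.1 h1) (le_max_left _ _))
          (le_trans (Metric.mem_closedBall.1 h2) (le_max_left _ _))
      _ = M := by rw [hMdef]; ring
  have hMnn : 0 ≤ M := by rw [hMdef]; positivity
  set K₀ : ℝ≥0 := F.sup' hFne K with hK₀def
  refine ⟨K₀ + Real.toNNReal (M / δ), LipschitzOnWith.of_dist_le_mul ?_⟩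
  intro x hx y hy
  have hKcoe : ((K₀ + Real.toNNReal (M / δ) : ℝ≥0) : ℝ) = (K₀ : ℝ) + Real.toNNReal (M / δ) := by
    push_cast; ring
  rcases lt_or_ge (dist x y) δ with hlt | hge
  · obtain ⟨i, hiF, hxi⟩ : ∃ i ∈ F, x ∈ Metric.ball i (ε i) := by
      simpa using Set.mem_iUnion₂.1 (hcover hx)
    have hδεi : δ ≤ ε i := Finset.inf'_le ε hiF
    have hxt : x ∈ t i := hε i (Metric.mem_ball.2
      (lt_of_lt_of_le (Metric.mem_ball.1 hxi) (by linarith [εpos i])))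
    have hyt : y ∈ t i := hε i (Metric.mem_ball.2 (by
      have h1 := Metric.mem_ball.1 hxi
      have h2 := dist_triangle y x i
      have h3 : dist y x = dist x y := dist_comm y x
      linarith))
    have hld := (hl i).dist_le_mul x hxt y hyt
    have hKi : (K i : ℝ) ≤ (K₀ : ℝ) := by exact_mod_cast Finset.le_sup' K hiF
    calc dist (f x) (f y) ≤ (K i : ℝ) * dist x y := hld
      _ ≤ ((K₀ + Real.toNNReal (M / δ) : ℝ≥0) : ℝ) * dist x y := by
          rw [hKcoe]
          have h0 : (0:ℝ) ≤ Real.toNNReal (M / δ) := (Real.toNNReal (M / δ)).coe_nonneg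
          nlinarith [dist_nonneg (x := x) (y := y)]
  · have hMδ : M ≤ M / δ * dist x y := by
      rw [div_mul_eq_mul_div, le_div_iff₀ hδpos]
      nlinarith
    have hcoe : (M / δ : ℝ) ≤ ((K₀ + Real.toNNReal (M / δ) : ℝ≥0) : ℝ) := by
      rw [hKcoe]
      have h1 : (Real.toNNReal (M / δ) : ℝ) = (M / δ : ℝ) := Real.coe_toNNReal _ (by positivity)
      nlinarith [K₀.coe_nonneg]
    calc dist (f x) (f y) ≤ M := hM x hx y hy
      _ ≤ M / δ * dist x y := hMδ
      _ ≤ ((K₀ + Real.toNNReal (M / δ) : ℝ≥0) : ℝ) * dist x y :=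
          mul_le_mul_of_nonneg_right hcoe dist_nonneg

section ProjLemmas

variable {V : Type*} [NormedAddCommGroup V] [InnerProductSpace ℝ V]

lemma projSub_mem (K : Submodule ℝ V) [K.HasOrthogonalProjection] (v : V) : projSub K v ∈ K :=
  (K.orthogonalProjectionOnto v).2

lemma projSub_eq_self (K : Submodule ℝ V) [K.HasOrthogonalProjection] {v : V} (hv : v ∈ K) :
    projSub K v = v := by
  exact (Submodule.starProjection_eq_self_iff (K := K)).2 hv

lemma projSub_idem (K : Submodule ℝ V) [K.HasOrthogonalProjection] (v : V) :
    projSub K (projSub K v) = projSub K v := projSub_eq_self K (projSub_mem K v)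

lemma norm_projSub_le (K : Submodule ℝ V) [K.HasOrthogonalProjection] (v : V) :
    ‖projSub K v‖ ≤ ‖v‖ := by
  simpa [projSub] using Submodule.orthogonalProjectionOnto_norm_le K |>.trans (le_refl 1) |>.trans_eq rfl
    |> fun h => (ContinuousLinearMap.le_of_opNorm_le _ h v)

lemma norm_sub_projSub_le (K : Submodule ℝ V) [K.HasOrthogonalProjection] (v : V) :
    ‖v - projSub K v‖ ≤ ‖v‖ := by
  have horth : ⟪projSub K v, v - projSub K v⟫_ℝ = 0 := by
    have h := Submodule.sub_starProjection_mem_orthogonal (K := K) v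
    exact Submodule.inner_right_of_mem_orthogonal (projSub_mem K v) h
  have hpyth : ‖v‖ ^ 2 = ‖projSub K v‖ ^ 2 + ‖v - projSub K v‖ ^ 2 := by
    have hv : v = projSub K v + (v - projSub K v) := by abel
    calc ‖v‖ ^ 2 = ‖projSub K v + (v - projSub K v)‖ ^ 2 := by rw [← hv]
      _ = ‖projSub K v‖ ^ 2 + 2 * ⟪projSub K v, v - projSub K v⟫_ℝ + ‖v - projSub K v‖ ^ 2 := by
          rw [← norm_add_sq_real]
      _ = _ := by rw [horth]; ring
  nlinarith [norm_nonneg (v - projSub K v), norm_nonneg v, norm_nonneg (projSub K v)]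

end ProjLemmas

section Core

variable {G V : Type*} [Group G] [TopologicalSpace G] [IsTopologicalGroup G] [CompactSpace G]
    [MeasurableSpace G] [BorelSpace G]
    [NormedAddCommGroup V] [InnerProductSpace ℝ V] [FiniteDimensional ℝ V]

/-- The averaged gradient field `∫ ρ(g)⁻¹ ∇R(ρ(g) v) dμ(g)`. -/
def gAvg (μ : Measure G) (ρ : G →* (V ≃ₗᵢ[ℝ] V)) (R : V → ℝ) : V → V :=
  fun v => ∫ g, (ρ g⁻¹) (gradient R (ρ g v)) ∂μ

/-- `ρ g` as a continuous linear map. -/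
def rhoCLM (ρ : G →* (V ≃ₗᵢ[ℝ] V)) (g : G) : V →L[ℝ] V :=
  ((ρ g).toLinearIsometry).toContinuousLinearMap

@[simp] lemma rhoCLM_apply (ρ : G →* (V ≃ₗᵢ[ℝ] V)) (g : G) (v : V) : rhoCLM ρ g v = ρ g v := rfl

variable {ρ : G →* (V ≃ₗᵢ[ℝ] V)} {R : V → ℝ}

lemma cont_rho_apply (hρ : Continuous fun p : G × V => ρ p.1 p.2) (v : V) :
    Continuous fun g : G => ρ g v :=
  hρ.comp (continuous_id.prodMk continuous_const : Continuous fun g : G => (g, v))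

lemma cont_gradR (hR : ContDiff ℝ 1 R) : Continuous (gradient R) := by
  have h := hR.continuous_fderiv one_ne_zero
  exact (toDual ℝ V).symm.continuous.comp h

lemma cont_integrand (hρ : Continuous fun p : G × V => ρ p.1 p.2) (hR : ContDiff ℝ 1 R) (v : V) :
    Continuous fun g : G => (ρ g⁻¹) (gradient R (ρ g v)) := by
  have h1 : Continuous fun g : G => gradient R (ρ g v) :=
    (cont_gradR hR).comp (cont_rho_apply hρ v)
  exact hρ.comp ((continuous_inv.comp continuous_id).prodMk h1)

lemma integrable_of_continuous (μ : Measure G) [IsFiniteMeasure μ] {E : Type*}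
    [NormedAddCommGroup E] {f : G → E} (hf : Continuous f) : Integrable f μ :=
  hf.integrable_of_hasCompactSupport
    (IsCompact.of_isClosed_subset isCompact_univ (isClosed_tsupport f) (Set.subset_univ _))

lemma cont_rhoCLM (hρ : Continuous fun p : G × V => ρ p.1 p.2) : Continuous (rhoCLM ρ) :=
  continuous_clm_apply.2 fun v => cont_rho_apply hρ v

/-- A Haar probability measure on a compact group is right invariant. -/
lemma haar_isMulRightInvariant (μ : Measure G) [μ.IsHaarMeasure] [IsProbabilityMeasure μ] :
    μ.IsMulRightInvariant := by
  constructor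
  intro g
  have hmeas : Measurable (· * g : G → G) := measurable_mul_const g
  have hprob : IsProbabilityMeasure (Measure.map (· * g) μ) :=
    Measure.isProbabilityMeasure_map hmeas.aemeasurable
  have h := Measure.isMulInvariant_eq_smul_of_compactSpace (Measure.map (· * g) μ) μ
  have huniv : (Measure.map (· * g) μ) Set.univ = 1 := measure_univ
  rw [h] at huniv
  simp only [Measure.smul_apply, measure_univ, smul_eq_mul, mul_one, ENNReal.smul_def] at huniv
  have hone : ((Measure.map (· * g) μ).haarScalarFactor μ) = (1 : ℝ≥0) := by
    exact_mod_cast huniv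
  rw [h, hone, one_smul]

/-- The augmented risk has gradient `gAvg` everywhere. -/
lemma hasGradientAt_augRisk (μ : Measure G) [μ.IsHaarMeasure] [IsProbabilityMeasure μ]
    (hρ : Continuous fun p : G × V => ρ p.1 p.2) (hR : ContDiff ℝ 1 R) (v₀ : V) :
    HasGradientAt (augRisk μ ρ R) (gAvg μ ρ R v₀) v₀ := by
  have hRd : Differentiable ℝ R := hR.differentiable one_ne_zero
  set S : Set V := (fun p : G × V => ρ p.1 p.2) '' (Set.univ ×ˢ Metric.closedBall v₀ 1) with hS
  have hScomp : IsCompact S :=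
    (isCompact_univ.prod (isCompact_closedBall v₀ 1)).image hρ
  obtain ⟨C, hC⟩ :=
    hScomp.exists_bound_of_continuousOn (hR.continuous_fderiv one_ne_zero).continuousOn
  have hmemS : ∀ (g : G) (x : V), x ∈ Metric.ball v₀ 1 → ρ g x ∈ S := fun g x hx =>
    ⟨(g, x), ⟨Set.mem_univ g, Metric.ball_subset_closedBall hx⟩, rfl⟩
  set F' : G → V →L[ℝ] ℝ := fun g => (fderiv ℝ R (ρ g v₀)).comp (rhoCLM ρ g) with hF'def
  have key := hasFDerivAt_integral_of_dominated_loc_of_lip (F := fun x g => R (ρ g x))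
      (F' := F') (x₀ := v₀) (bound := fun _ => C) (μ := μ) (s := Metric.ball v₀ 1) (Metric.ball_mem_nhds v₀ one_pos)
      ?meas ?int ?meas' ?lip ?bint ?diff
  · obtain ⟨hFint, hFder⟩ := key
    have hid : (∫ g, F' g ∂μ) = (toDual ℝ V) (gAvg μ ρ R v₀) := by
      ext y
      rw [ContinuousLinearMap.integral_apply hFint]
      have hptw : ∀ g : G, F' g y = ⟪(ρ g⁻¹) (gradient R (ρ g v₀)), y⟫_ℝ := by
        intro g
        have h1 : F' g y = fderiv ℝ R (ρ g v₀) (ρ g y) := rfl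
        have h2 : fderiv ℝ R (ρ g v₀) (ρ g y) = ⟪gradient R (ρ g v₀), ρ g y⟫_ℝ := by
          have hgr := (hRd (ρ g v₀)).hasGradientAt.hasFDerivAt
          rw [hgr.fderiv]
          simp [toDual_apply_apply]
        have h3 : (ρ g⁻¹ : V ≃ₗᵢ[ℝ] V) = (ρ g).symm := by
          rw [map_inv]; rfl
        have h4 : ⟪gradient R (ρ g v₀), ρ g y⟫_ℝ = ⟪(ρ g⁻¹) (gradient R (ρ g v₀)), y⟫_ℝ := by
          conv_lhs => rw [show gradient R (ρ g v₀) = ρ g ((ρ g).symm (gradient R (ρ g v₀))) by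
            rw [LinearIsometryEquiv.apply_symm_apply]]
          rw [LinearIsometryEquiv.inner_map_map, h3]
        rw [h1, h2, h4]
      calc (∫ g, F' g y ∂μ) = ∫ g, ⟪(ρ g⁻¹) (gradient R (ρ g v₀)), y⟫_ℝ ∂μ := by
            simp_rw [hptw]
        _ = ∫ g, ⟪y, (ρ g⁻¹) (gradient R (ρ g v₀))⟫_ℝ ∂μ := by simp_rw [real_inner_comm]
        _ = ⟪y, gAvg μ ρ R v₀⟫_ℝ := by
            rw [gAvg]
            exact integral_inner (integrable_of_continuous μ (cont_integrand hρ hR v₀)) y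
        _ = ⟪gAvg μ ρ R v₀, y⟫_ℝ := real_inner_comm _ _
        _ = (toDual ℝ V) (gAvg μ ρ R v₀) y := by simp [toDual_apply_apply]
    rw [hasGradientAt_iff_hasFDerivAt, ← hid]
    exact hFder
  case meas =>
    filter_upwards with x
    exact ((hR.continuous).comp (cont_rho_apply hρ x)).aestronglyMeasurable
  case int =>
    exact integrable_of_continuous μ ((hR.continuous).comp (cont_rho_apply hρ v₀))
  case meas' =>
    apply Continuous.aestronglyMeasurable
    exact ((hR.continuous_fderiv one_ne_zero).comp (cont_rho_apply hρ v₀)).clm_comp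
      (cont_rhoCLM hρ)
  case lip =>
    filter_upwards with g
    have hlip : ∀ x ∈ Metric.ball v₀ 1, ∀ y ∈ Metric.ball v₀ 1,
        dist (R (ρ g x)) (R (ρ g y)) ≤ Real.nnabs C * dist x y := by
      intro x hx y hy
      have hder : ∀ z ∈ Metric.ball v₀ 1, HasFDerivWithinAt (fun w => R (ρ g w))
          ((fderiv ℝ R (ρ g z)).comp (rhoCLM ρ g)) (Metric.ball v₀ 1) z := by
        intro z hz
        exact (((hRd (ρ g z)).hasFDerivAt).comp z
          ((rhoCLM ρ g).hasFDerivAt)).hasFDerivWithinAt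
      have hbd : ∀ z ∈ Metric.ball v₀ 1, ‖(fderiv ℝ R (ρ g z)).comp (rhoCLM ρ g)‖ ≤ |C| := by
        intro z hz
        calc ‖(fderiv ℝ R (ρ g z)).comp (rhoCLM ρ g)‖
            ≤ ‖fderiv ℝ R (ρ g z)‖ * ‖rhoCLM ρ g‖ := ContinuousLinearMap.opNorm_comp_le _ _
          _ ≤ |C| * 1 := by
              apply mul_le_mul
              · exact (hC _ (hmemS g z hz)).trans (le_abs_self C)
              · exact (ρ g).toLinearIsometry.norm_toContinuousLinearMap_le
              · exact norm_nonneg _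
              · exact abs_nonneg _
          _ = |C| := mul_one _
      have hmv := (convex_ball v₀ 1).norm_image_sub_le_of_norm_hasFDerivWithin_le hder hbd hy hx
      rw [dist_eq_norm, Real.coe_nnabs]
      calc ‖R (ρ g x) - R (ρ g y)‖ ≤ |C| * ‖x - y‖ := hmv
        _ = |C| * dist x y := by rw [dist_eq_norm]
    exact LipschitzOnWith.of_dist_le_mul hlip
  case bint => exact integrable_const C
  case diff =>
    filter_upwards with g
    exact ((hRd (ρ g v₀)).hasFDerivAt).comp v₀ ((rhoCLM ρ g).hasFDerivAt)

/-- At fixed points of the action, the averaged gradient is itself fixed. -/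
lemma gAvg_fixed (μ : Measure G) [μ.IsHaarMeasure] [IsProbabilityMeasure μ]
    (hρ : Continuous fun p : G × V => ρ p.1 p.2) (hR : ContDiff ℝ 1 R)
    {v : V} (hv : ∀ g : G, ρ g v = v) (h : G) :
    ρ h (gAvg μ ρ R v) = gAvg μ ρ R v := by
  have hinv : μ.IsMulRightInvariant := haar_isMulRightInvariant μ
  have hint : Integrable (fun g => (ρ g⁻¹) (gradient R (ρ g v))) μ :=
    integrable_of_continuous μ (cont_integrand hρ hR v)
  calc ρ h (gAvg μ ρ R v) = rhoCLM ρ h (∫ g, (ρ g⁻¹) (gradient R (ρ g v)) ∂μ) := rfl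
    _ = ∫ g, rhoCLM ρ h ((ρ g⁻¹) (gradient R (ρ g v))) ∂μ :=
        ((rhoCLM ρ h).integral_comp_comm hint).symm
    _ = ∫ g, (ρ (h * g⁻¹)) (gradient R (ρ g v)) ∂μ := by
        congr 1; funext g
        rw [rhoCLM_apply, map_mul]
        rfl
    _ = ∫ g, (fun k => (ρ (h * k⁻¹)) (gradient R (ρ k v))) (g * h) ∂μ :=
        (integral_mul_right_eq_self (fun k => (ρ (h * k⁻¹)) (gradient R (ρ k v))) h).symm
    _ = ∫ g, (ρ g⁻¹) (gradient R (ρ g v)) ∂μ := by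
        congr 1; funext g
        have e1 : h * (g * h)⁻¹ = g⁻¹ := by group
        have e2 : ρ (g * h) v = ρ g v := by rw [map_mul]; show ρ g (ρ h v) = ρ g v; rw [hv h]
        simp only [e1, e2]
    _ = gAvg μ ρ R v := rfl

/-- Lipschitz bound for the averaged gradient on closed balls. -/
lemma gAvg_lipschitzOnWith (μ : Measure G) [μ.IsHaarMeasure] [IsProbabilityMeasure μ]
    (hρ : Continuous fun p : G × V => ρ p.1 p.2) (hR : ContDiff ℝ 1 R)
    (hlip : LocallyLipschitz (gradient R)) (r : ℝ) :
    ∃ K : ℝ≥0, LipschitzOnWith K (gAvg μ ρ R) (Metric.closedBall (0 : V) r) := by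
  set T : Set V := (fun p : G × V => ρ p.1 p.2) '' (Set.univ ×ˢ Metric.closedBall (0:V) r) with hT
  have hTcomp : IsCompact T := (isCompact_univ.prod (isCompact_closedBall _ _)).image hρ
  obtain ⟨K, hK⟩ := hlip.exists_lipschitzOnWith_isCompact hTcomp
  refine ⟨K, LipschitzOnWith.of_dist_le_mul ?_⟩
  intro x hx y hy
  have hmemT : ∀ (g : G) (z : V), z ∈ Metric.closedBall (0:V) r → ρ g z ∈ T := fun g z hz =>
    ⟨(g, z), ⟨Set.mem_univ g, hz⟩, rfl⟩
  have hix : Integrable (fun g => (ρ g⁻¹) (gradient R (ρ g x))) μ :=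
    integrable_of_continuous μ (cont_integrand hρ hR x)
  have hiy : Integrable (fun g => (ρ g⁻¹) (gradient R (ρ g y))) μ :=
    integrable_of_continuous μ (cont_integrand hρ hR y)
  rw [dist_eq_norm, dist_eq_norm]
  calc ‖gAvg μ ρ R x - gAvg μ ρ R y‖
      = ‖∫ g, ((ρ g⁻¹) (gradient R (ρ g x)) - (ρ g⁻¹) (gradient R (ρ g y))) ∂μ‖ := by
        rw [integral_sub hix hiy]; rfl
    _ ≤ ∫ g, ‖(ρ g⁻¹) (gradient R (ρ g x)) - (ρ g⁻¹) (gradient R (ρ g y))‖ ∂μ :=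
        norm_integral_le_integral_norm _
    _ ≤ ∫ (_ : G), (K : ℝ) * ‖x - y‖ ∂μ := by
        apply integral_mono_of_nonneg
        · filter_upwards with g; positivity
        · exact integrable_const _
        · filter_upwards with g
          have h1 : (ρ g⁻¹) (gradient R (ρ g x)) - (ρ g⁻¹) (gradient R (ρ g y))
              = (ρ g⁻¹) (gradient R (ρ g x) - gradient R (ρ g y)) := by rw [map_sub]
          rw [h1, (ρ g⁻¹).norm_map]
          have h2 := hK.dist_le_mul (ρ g x) (hmemT g x hx) (ρ g y) (hmemT g y hy)
          rw [dist_eq_norm, dist_eq_norm] at h2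
          calc ‖gradient R (ρ g x) - gradient R (ρ g y)‖ ≤ K * ‖ρ g x - ρ g y‖ := h2
            _ = K * ‖x - y‖ := by rw [← map_sub, (ρ g).norm_map]
    _ = (K : ℝ) * ‖x - y‖ := by
        rw [integral_const]
        simp

end Core

/-- Under the compatibility condition, the equivariant subspace
`E = H_G ⊓ L` is an invariant set of the augmented gradient-flow dynamics
`A' = -Π_L ∇R^aug(A)`. -/
theorem equivariant_subspace_invariant
    {G V : Type*} [Group G] [TopologicalSpace G] [IsTopologicalGroup G] [CompactSpace G]
    [MeasurableSpace G] [BorelSpace G]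
    [NormedAddCommGroup V] [InnerProductSpace ℝ V] [FiniteDimensional ℝ V]
    (μ : Measure G) [μ.IsHaarMeasure] [IsProbabilityMeasure μ]
    (ρ : G →* (V ≃ₗᵢ[ℝ] V)) (hρ : Continuous fun p : G × V => ρ p.1 p.2)
    (L : Submodule ℝ V)
    (hcompat : (projSub L).comp (projSub (fixedSubmodule ρ)) =
      (projSub (fixedSubmodule ρ)).comp (projSub L))
    (R : V → ℝ) (hR : ContDiff ℝ 1 R) (hlip : LocallyLipschitz (gradient R))
    (A : ℝ → V)
    (hmem : ∀ t : ℝ, 0 ≤ t → A t ∈ L)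
    (hode : ∀ t : ℝ, 0 ≤ t →
      HasDerivAt A (-(projSub L (gradient (augRisk μ ρ R) (A t)))) t)
    (h0 : A 0 ∈ fixedSubmodule ρ ⊓ L) :
    ∀ t : ℝ, 0 ≤ t → A t ∈ fixedSubmodule ρ ⊓ L := by
  intro T hT
  set H : Submodule ℝ V := fixedSubmodule ρ with hHdef
  -- identify the gradient of the augmented risk
  have hgrad : gradient (augRisk μ ρ R) = gAvg μ ρ R :=
    funext fun v => (hasGradientAt_augRisk μ hρ hR v).gradient
  have hode' : ∀ t : ℝ, 0 ≤ t → HasDerivAt A (-(projSub L (gAvg μ ρ R (A t)))) t := by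
    intro t ht
    have := hode t ht
    rwa [hgrad] at this
  -- the projection onto the equivariant subspace
  set Q : V →L[ℝ] V := (projSub L).comp (projSub H) with hQdef
  have hQapp : ∀ v : V, Q v = projSub L (projSub H v) := fun v => rfl
  have hcompat' : ∀ v : V, projSub L (projSub H v) = projSub H (projSub L v) := by
    intro v
    exact congrArg (fun (T : V →L[ℝ] V) => T v) hcompat
  have hQmemL : ∀ v : V, Q v ∈ L := fun v => projSub_mem L _
  have hQmemH : ∀ v : V, Q v ∈ H := by
    intro v
    rw [hQapp, hcompat']
    exact projSub_mem H _
  have hQfix : ∀ v : V, v ∈ H → v ∈ L → Q v = v := by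
    intro v hvH hvL
    rw [hQapp, projSub_eq_self H hvH, projSub_eq_self L hvL]
  -- continuity of the trajectory
  have hAcont : ContinuousOn A (Set.Icc 0 T) := by
    intro t ht
    exact ((hode' t ht.1).continuousAt).continuousWithinAt
  -- a ball containing the relevant trajectory points
  have hScomp : IsCompact (A '' Set.Icc 0 T ∪ Q '' (A '' Set.Icc 0 T)) := by
    have h1 : IsCompact (A '' Set.Icc 0 T) := isCompact_Icc.image_of_continuousOn hAcont
    exact h1.union (h1.image Q.continuous)
  obtain ⟨r, hr⟩ := (Metric.isBounded_iff_subset_closedBall 0).1 hScomp.isBounded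
  obtain ⟨K, hK⟩ := gAvg_lipschitzOnWith μ hρ hR hlip r
  have hAball : ∀ t ∈ Set.Icc (0:ℝ) T, A t ∈ Metric.closedBall (0:V) r := fun t ht =>
    hr (Or.inl ⟨t, ht, rfl⟩)
  have hQAball : ∀ t ∈ Set.Icc (0:ℝ) T, Q (A t) ∈ Metric.closedBall (0:V) r := fun t ht =>
    hr (Or.inr ⟨A t, ⟨t, ht, rfl⟩, rfl⟩)
  -- the deviation from the equivariant subspace
  set w : ℝ → V := fun t => A t - Q (A t) with hwdef
  set dd : ℝ → V := fun t => -(projSub L (gAvg μ ρ R (A t))) with hdddef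
  set w' : ℝ → V := fun t => dd t - Q (dd t) with hw'def
  have hw0 : w 0 = 0 := by
    obtain ⟨h0H, h0L⟩ := Submodule.mem_inf.1 h0
    simp only [hwdef, hQfix (A 0) h0H h0L, sub_self]
  have hwder : ∀ t : ℝ, 0 ≤ t → HasDerivAt w (w' t) t := by
    intro t ht
    have h1 := hode' t ht
    have h2 : HasDerivAt (fun s => Q (A s)) (Q (dd t)) t := Q.hasFDerivAt.comp_hasDerivAt t h1
    exact h1.sub h2
  have hwcont : ContinuousOn w (Set.Icc 0 T) := by
    intro t ht
    exact ((hwder t ht.1).continuousAt).continuousWithinAt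
  -- the key pointwise bound
  have hbound : ∀ t ∈ Set.Ico (0:ℝ) T, ‖w' t‖ ≤ (K : ℝ) * ‖w t‖ + 0 := by
    intro t ht
    have htIcc : t ∈ Set.Icc (0:ℝ) T := ⟨ht.1, le_of_lt ht.2⟩
    set u : V := gAvg μ ρ R (A t) with hudef
    set z : V := Q (A t) with hzdef
    set u' : V := gAvg μ ρ R z with hu'def
    -- u' is fixed by the action
    have hzH : z ∈ H := hQmemH (A t)
    have hu'H : ∀ g : G, ρ g u' = u' := fun g => gAvg_fixed μ hρ hR (fun g' => hzH g') g
    have hu'fix : projSub H u' = u' := projSub_eq_self H hu'H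
    -- rewrite w' t
    have hw't : w' t = -(projSub L u - Q (projSub L u)) := by
      simp only [hw'def, hdddef, hudef, map_neg]
      abel
    have hQPL : Q (projSub L u) = projSub L (projSub H u) := by
      rw [hQapp, hcompat', projSub_idem L]
      exact (hcompat' u).symm
    have hsplit : projSub L u - Q (projSub L u) = projSub L (u - projSub H u) := by
      rw [hQPL, map_sub]
    have hub : ‖u - projSub H u‖ ≤ (K : ℝ) * ‖w t‖ := by
      have hdiff : u - projSub H u = (u - u') - projSub H (u - u') := by
        rw [map_sub, hu'fix]
        abel
      rw [hdiff]
      have h1 : ‖(u - u') - projSub H (u - u')‖ ≤ ‖u - u'‖ := norm_sub_projSub_le H (u - u')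
      have h2 : ‖u - u'‖ ≤ (K : ℝ) * ‖A t - z‖ := by
        have := hK.dist_le_mul (A t) (hAball t htIcc) z (hQAball t htIcc)
        rwa [dist_eq_norm, dist_eq_norm] at this
      exact h1.trans h2
    calc ‖w' t‖ = ‖projSub L (u - projSub H u)‖ := by rw [hw't, norm_neg, hsplit]
      _ ≤ ‖u - projSub H u‖ := norm_projSub_le L _
      _ ≤ (K : ℝ) * ‖w t‖ := hub
      _ = (K : ℝ) * ‖w t‖ + 0 := by ring
  -- Grönwall
  have hgron := norm_le_gronwallBound_of_norm_deriv_right_le (f := w) (f' := w')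
    (δ := 0) (K := (K : ℝ)) (ε := 0) (a := 0) (b := T) hwcont
    (fun t ht => (hwder t ht.1).hasDerivWithinAt)
    (by rw [hw0]; simp) hbound
  have hwT : w T = 0 := by
    have := hgron T ⟨hT, le_refl T⟩
    rw [gronwallBound_ε0_δ0] at this
    exact norm_le_zero_iff.1 this
  have hAT : A T = Q (A T) := by
    have h : A T - Q (A T) = 0 := hwT
    exact sub_eq_zero.1 h
  rw [Submodule.mem_inf]
  constructor
  · rw [hAT]; exact hQmemH (A T)
  · exact hmem T hT

end
end

section
/- Assume the compatibility condition Π_L Π_G = Π_G Π_L, that R is three times continuously differentiable, that R^aug(A) ≥ 0 for every A ∈ L, that ⟨(R^aug)''(A)Y, Y⟩ ≥ σ‖Y‖² for all A ∈ E and Y ∈ TE^⊥ for some σ ∈ ℝ, and that the third derivative of R^aug is uniformly bounded by M. Let γ > 0 and let A : [0,∞) → L be a differentiable curve satisfying A'(t) = −Π_L ∇R^aug(A(t)) − γ Π_{E⊥} A(t) for all t ≥ 0, and set Y(t) := Π_{E⊥} A(t) and α := (2/γ) R^aug(A(0)) + ‖Y(0)‖². Then for all t ≥ 0, (d/dt)(½‖Y(t)‖²)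 ≤ ((M/2)√α − σ − γ)‖Y(t)‖². -/
open MeasureTheory InnerProductSpace RealInnerProductSpace

noncomputable section

/-! ### Auxiliary material -/

set_option linter.unusedSectionVars false

open Metric

section ProjLemmas

variable {V : Type*} [NormedAddCommGroup V] [InnerProductSpace ℝ V] [FiniteDimensional ℝ V]

namespace prAux

variable (K : Submodule ℝ V)

lemma mem (x : V) : projSub K x ∈ K := (K.orthogonalProjectionOnto x).2

lemma eq_self {x : V} (hx : x ∈ K) : projSub K x = x := by
  exact K.starProjection_eq_self_iff.2 hx

lemma inner_left (x y : V) : ⟪projSub K x, y⟫_ℝ = ⟪x, projSub K y⟫_ℝ :=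
  K.inner_starProjection_left_eq_right x y

lemma sub_mem_orth (x : V) : x - projSub K x ∈ Kᗮ :=
  K.sub_starProjection_mem_orthogonal x

lemma idem (x : V) : projSub K (projSub K x) = projSub K x := eq_self K (mem K x)

end prAux

lemma orth_HK (H L : Submodule ℝ V)
    (hcompat : (projSub L).comp (projSub H) = (projSub H).comp (projSub L))
    {h y : V} (hh : h ∈ H) (hy : y ∈ L ⊓ (H ⊓ L)ᗮ) : ⟪h, y⟫_ℝ = 0 := by
  have hyL : y ∈ L := (Submodule.mem_inf.1 hy).1
  have hyO : y ∈ (H ⊓ L)ᗮ := (Submodule.mem_inf.1 hy).2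
  have h2 : projSub L h ∈ H ⊓ L := by
    refine Submodule.mem_inf.2 ⟨?_, prAux.mem L h⟩
    have e1 : projSub L h = projSub L (projSub H h) := by rw [prAux.eq_self H hh]
    have e2 : projSub L (projSub H h) = projSub H (projSub L h) :=
      DFunLike.congr_fun hcompat h
    rw [e1, e2]
    exact prAux.mem H _
  have e3 : ⟪h, y⟫_ℝ = ⟪projSub L h, y⟫_ℝ := by
    rw [prAux.inner_left L h y, prAux.eq_self L hyL]
  rw [e3]
  exact (Submodule.mem_orthogonal _ y).1 hyO _ h2

lemma mem_E_of_sub_proj (H L : Submodule ℝ V) {x : V} (hx : x ∈ L) :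
    x - projSub (L ⊓ (H ⊓ L)ᗮ) x ∈ H ⊓ L := by
  set E := H ⊓ L with hE
  set K := L ⊓ Eᗮ with hK
  set X := x - projSub K x with hX
  have hXL : X ∈ L := sub_mem hx (Submodule.mem_inf.1 (prAux.mem K x)).1
  have hXKo : X ∈ Kᗮ := prAux.sub_mem_orth K x
  set Z := X - projSub E X with hZ
  have hZL : Z ∈ L := sub_mem hXL (Submodule.mem_inf.1 (prAux.mem E X)).2
  have hZEo : Z ∈ Eᗮ := prAux.sub_mem_orth E X
  have hZK : Z ∈ K := Submodule.mem_inf.2 ⟨hZL, hZEo⟩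
  have h1 : ⟪Z, X⟫_ℝ = 0 := (Submodule.mem_orthogonal _ X).1 hXKo _ hZK
  have h2 : ⟪projSub E X, Z⟫_ℝ = 0 := (Submodule.mem_orthogonal _ Z).1 hZEo _ (prAux.mem E X)
  have hZ0 : Z = 0 := by
    have : ⟪Z, Z⟫_ℝ = 0 := by
      have e : ⟪Z, Z⟫_ℝ = ⟪Z, X⟫_ℝ - ⟪Z, projSub E X⟫_ℝ := by
        rw [hZ, inner_sub_right]
      rw [e, h1, real_inner_comm, h2, sub_zero]
    exact inner_self_eq_zero.1 this
  have : X = projSub E X := by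
    have := sub_eq_zero.1 hZ0
    exact this
  rw [this]
  exact prAux.mem E X

lemma lyap_step (L K : Submodule ℝ V) (hKL : ∀ x, projSub L (projSub K x) = projSub K x)
    {γ : ℝ} (hγ : 0 < γ) (g a : V) :
    2 / γ * ⟪g, -(projSub L g) - γ • projSub K a⟫_ℝ
      + (⟪projSub K a, projSub K (-(projSub L g) - γ • projSub K a)⟫_ℝ
        + ⟪projSub K (-(projSub L g) - γ • projSub K a), projSub K a⟫_ℝ) ≤ 0 := by
  have hq : ⟪g, projSub L g⟫_ℝ = ⟪projSub L g, projSub L g⟫_ℝ := by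
    calc ⟪g, projSub L g⟫_ℝ = ⟪projSub L g, g⟫_ℝ := real_inner_comm _ _
      _ = ⟪projSub L (projSub L g), g⟫_ℝ := by rw [prAux.idem L g]
      _ = ⟪projSub L g, projSub L g⟫_ℝ := prAux.inner_left L (projSub L g) g
  have hgy : ⟪g, projSub K a⟫_ℝ = ⟪projSub L g, projSub K a⟫_ℝ := by
    calc ⟪g, projSub K a⟫_ℝ = ⟪g, projSub L (projSub K a)⟫_ℝ := by rw [hKL a]
      _ = ⟪projSub L g, projSub K a⟫_ℝ := (prAux.inner_left L g (projSub K a)).symm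
  have hP1 : ⟪projSub K (-(projSub L g) - γ • projSub K a), projSub K a⟫_ℝ
      = ⟪-(projSub L g) - γ • projSub K a, projSub K a⟫_ℝ := by
    rw [prAux.inner_left K (-(projSub L g) - γ • projSub K a) (projSub K a), prAux.idem K a]
  have hP2 : ⟪projSub K a, projSub K (-(projSub L g) - γ • projSub K a)⟫_ℝ
      = ⟪-(projSub L g) - γ • projSub K a, projSub K a⟫_ℝ := by
    rw [real_inner_comm, hP1]
  have e1 : ⟪g, -(projSub L g) - γ • projSub K a⟫_ℝ
      = -⟪g, projSub L g⟫_ℝ - γ * ⟪g, projSub K a⟫_ℝ := by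
    rw [inner_sub_right, inner_neg_right, real_inner_smul_right]
  have e2 : ⟪-(projSub L g) - γ • projSub K a, projSub K a⟫_ℝ
      = -⟪projSub L g, projSub K a⟫_ℝ - γ * ⟪projSub K a, projSub K a⟫_ℝ := by
    rw [inner_sub_left, inner_neg_left, real_inner_smul_left]
  have hsq : (0 : ℝ) ≤ ⟪projSub L g + γ • projSub K a, projSub L g + γ • projSub K a⟫_ℝ :=
    real_inner_self_nonneg
  have hexp : ⟪projSub L g + γ • projSub K a, projSub L g + γ • projSub K a⟫_ℝ
      = ⟪projSub L g, projSub L g⟫_ℝ + 2 * (γ * ⟪projSub L g, projSub K a⟫_ℝ)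
        + γ ^ 2 * ⟪projSub K a, projSub K a⟫_ℝ := by
    rw [real_inner_add_add_self, real_inner_smul_right, real_inner_smul_left,
      real_inner_smul_right]
    ring
  rw [hP1, hP2, e1, e2, hq, hgy]
  rw [hexp] at hsq
  have h2γ : (0 : ℝ) < 2 / γ := by positivity
  have hγ' : γ ≠ 0 := ne_of_gt hγ
  have heq : 2 / γ * (-⟪projSub L g, projSub L g⟫_ℝ - γ * ⟪projSub L g, projSub K a⟫_ℝ)
      + ((-⟪projSub L g, projSub K a⟫_ℝ - γ * ⟪projSub K a, projSub K a⟫_ℝ)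
        + (-⟪projSub L g, projSub K a⟫_ℝ - γ * ⟪projSub K a, projSub K a⟫_ℝ))
      = -(2 / γ * (⟪projSub L g, projSub L g⟫_ℝ + 2 * (γ * ⟪projSub L g, projSub K a⟫_ℝ)
        + γ ^ 2 * ⟪projSub K a, projSub K a⟫_ℝ)) := by
    field_simp
    ring
  have h5 := mul_nonneg h2γ.le hsq
  linarith [heq, h5]


lemma proj_inner_eq (K : Submodule ℝ V) (v a : V) :
    ⟪projSub K v, projSub K a⟫_ℝ = ⟪v, projSub K a⟫_ℝ := by
  rw [prAux.inner_left K v (projSub K a), prAux.idem K a]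


def dualIso (V : Type*) [NormedAddCommGroup V] [InnerProductSpace ℝ V] [FiniteDimensional ℝ V] :
    (V →L[ℝ] ℝ) ≃ₗᵢ[ℝ] V where
  toFun := fun ℓ => (InnerProductSpace.toDual ℝ V).symm ℓ
  invFun := fun v => InnerProductSpace.toDual ℝ V v
  map_add' := fun a b => map_add _ a b
  map_smul' := fun r ℓ => by
    simpa using (InnerProductSpace.toDual ℝ V).symm.map_smulₛₗ r ℓ
  left_inv := fun ℓ => (InnerProductSpace.toDual ℝ V).apply_symm_apply ℓ
  right_inv := fun v => (InnerProductSpace.toDual ℝ V).symm_apply_apply v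
  norm_map' := fun ℓ => (InnerProductSpace.toDual ℝ V).symm.norm_map ℓ

lemma inner_gradient_eq_fderiv (f : V → ℝ) (x v : V) :
    ⟪gradient f x, v⟫_ℝ = fderiv ℝ f x v :=
  InnerProductSpace.toDual_symm_apply

lemma taylor_bound' {f : V → V} {f' : V → V →L[ℝ] V} (hf : ∀ x, HasFDerivAt f (f' x) x)
    {M : ℝ} (hlip : ∀ a b, ‖f' b - f' a‖ ≤ M * ‖b - a‖) (X Y : V) :
    ‖f (X + Y) - f X - f' X Y‖ ≤ M / 2 * ‖Y‖ ^ 2 := by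
  set φ : ℝ → V := fun s => f (X + s • Y) - f X - s • (f' X Y) with hφ
  have hφd : ∀ s : ℝ, HasDerivAt φ (f' (X + s • Y) Y - f' X Y) s := by
    intro s
    have h1 : HasDerivAt (fun s : ℝ => X + s • Y) Y s := by
      simpa using ((hasDerivAt_id s).smul_const Y).const_add X
    have h2 : HasDerivAt (fun s : ℝ => f (X + s • Y)) (f' (X + s • Y) Y) s :=
      (hf _).comp_hasDerivAt s h1
    have h3 : HasDerivAt (fun s : ℝ => s • (f' X Y)) (f' X Y) s := by
      simpa using (hasDerivAt_id s).smul_const (f' X Y)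
    exact (h2.sub_const (f X)).sub h3
  have hB : ∀ s : ℝ, HasDerivAt (fun s => M / 2 * ‖Y‖ ^ 2 * s ^ 2) (M * ‖Y‖ ^ 2 * s) s := by
    intro s
    have := (hasDerivAt_pow 2 s).const_mul (M / 2 * ‖Y‖ ^ 2)
    refine this.congr_deriv ?_
    norm_num
    ring
  have hmain := image_norm_le_of_norm_deriv_right_le_deriv_boundary (a := 0) (b := 1)
    (f := φ) (f' := fun s => f' (X + s • Y) Y - f' X Y)
    (B := fun s => M / 2 * ‖Y‖ ^ 2 * s ^ 2) (B' := fun s => M * ‖Y‖ ^ 2 * s)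
    (fun s _ => ((hφd s).continuousAt).continuousWithinAt)
    (fun s _ => (hφd s).hasDerivWithinAt)
    (by simp [hφ]) hB ?_ (Set.right_mem_Icc.2 zero_le_one)
  · simpa [hφ] using hmain
  · intro s hs
    have hs0 : 0 ≤ s := hs.1
    calc ‖f' (X + s • Y) Y - f' X Y‖ = ‖(f' (X + s • Y) - f' X) Y‖ := by
          rw [ContinuousLinearMap.sub_apply]
      _ ≤ ‖f' (X + s • Y) - f' X‖ * ‖Y‖ := (f' (X + s • Y) - f' X).le_opNorm Y
      _ ≤ (M * ‖X + s • Y - X‖) * ‖Y‖ :=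
          mul_le_mul_of_nonneg_right (hlip X (X + s • Y)) (norm_nonneg Y)
      _ = M * ‖Y‖ ^ 2 * s := by
          rw [add_sub_cancel_left, norm_smul]
          simp [abs_of_nonneg hs0]
          ring

end ProjLemmas

section AugSmooth

variable {G V : Type*} [Group G] [TopologicalSpace G] [IsTopologicalGroup G] [CompactSpace G]
    [MeasurableSpace G] [BorelSpace G]
    [NormedAddCommGroup V] [InnerProductSpace ℝ V] [FiniteDimensional ℝ V]
    (μ : Measure G) [μ.IsHaarMeasure] [IsProbabilityMeasure μ]
    (ρ : G →* (V ≃ₗᵢ[ℝ] V))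

def cρ (g : G) : V →L[ℝ] V := (ρ g).toLinearIsometry.toContinuousLinearMap

lemma cρ_apply (g : G) (v : V) : cρ ρ g v = ρ g v := rfl

lemma norm_cρ_le (g : G) : ‖cρ ρ g‖ ≤ 1 := by
  refine ContinuousLinearMap.opNorm_le_bound _ zero_le_one fun v => ?_
  simp [cρ_apply, one_mul, (ρ g).norm_map]

lemma ball_bound {x₀ x : V} (hx : x ∈ ball x₀ 1) (g : G) :
    ρ g x ∈ closedBall (0 : V) (‖x₀‖ + 1) := by
  rw [mem_closedBall_zero_iff, (ρ g).norm_map]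
  have := mem_ball_iff_norm.1 hx
  have h2 := norm_add_le (x - x₀) x₀
  rw [sub_add_cancel] at h2
  linarith

variable (hρ : Continuous fun p : G × V => ρ p.1 p.2)
include hρ

lemma cont_apply (x : V) : Continuous fun g => ρ g x :=
  hρ.comp (continuous_id.prodMk continuous_const)

lemma cρ_cont : Continuous fun g => cρ ρ g :=
  continuous_clm_apply.2 fun v => cont_apply ρ hρ v

omit hρ in
lemma integrable_cont {E : Type*} [NormedAddCommGroup E] (f : G → E) (hf : Continuous f) :
    Integrable f μ :=
  hf.integrable_of_hasCompactSupport (HasCompactSupport.of_compactSpace f)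

section key
variable {W W' : Type*} [NormedAddCommGroup W] [NormedSpace ℝ W] [FiniteDimensional ℝ W]
    [NormedAddCommGroup W'] [NormedSpace ℝ W'] [FiniteDimensional ℝ W']

lemma key (u : V → W) (hu : ContDiff ℝ 1 u)
    (A : G → W →L[ℝ] W') (hA : Continuous A) (hA1 : ∀ g, ‖A g‖ ≤ 1) (x₀ : V) :
    HasFDerivAt (fun x => ∫ g, A g (u (ρ g x)) ∂μ)
      (∫ g, ((A g).comp ((fderiv ℝ u (ρ g x₀)).comp (cρ ρ g))) ∂μ) x₀ := by
  have hud : Differentiable ℝ u := hu.differentiable one_ne_zero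
  have hfc : Continuous (fderiv ℝ u) := hu.continuous_fderiv one_ne_zero
  obtain ⟨C, hC⟩ := (isCompact_closedBall (0 : V) (‖x₀‖ + 1)).exists_bound_of_continuousOn
    hfc.continuousOn
  have hC0 : 0 ≤ C := (norm_nonneg _).trans (hC 0 (by simp [mem_closedBall]; positivity))
  refine hasFDerivAt_integral_of_dominated_of_fderiv_le
    (F' := fun x g => (A g).comp ((fderiv ℝ u (ρ g x)).comp (cρ ρ g)))
    (bound := fun _ => C) (ball_mem_nhds x₀ one_pos) ?_ ?_ ?_ ?_ ?_ ?_
  · refine Filter.Eventually.of_forall fun x => Continuous.aestronglyMeasurable ?_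
    exact hA.clm_apply (hu.continuous.comp (cont_apply ρ hρ x))
  · exact integrable_cont μ _ (hA.clm_apply (hu.continuous.comp (cont_apply ρ hρ x₀)))
  · refine Continuous.aestronglyMeasurable ?_
    refine continuous_clm_apply.2 fun v => ?_
    exact hA.clm_apply (((hfc.comp (cont_apply ρ hρ x₀)).clm_apply
      ((cρ_cont ρ hρ).clm_apply continuous_const)))
  · refine Filter.Eventually.of_forall fun g => fun x hx => ?_
    have h1 : ‖(fderiv ℝ u (ρ g x)).comp (cρ ρ g)‖ ≤ C * 1 :=
      (ContinuousLinearMap.opNorm_comp_le _ _).trans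
        (mul_le_mul (hC _ (ball_bound ρ hx g)) (norm_cρ_le ρ g) (norm_nonneg _) hC0)
    have h2 : ‖(A g).comp ((fderiv ℝ u (ρ g x)).comp (cρ ρ g))‖ ≤ 1 * (C * 1) :=
      (ContinuousLinearMap.opNorm_comp_le _ _).trans
        (mul_le_mul (hA1 g) h1 (norm_nonneg _) zero_le_one)
    linarith
  · exact integrable_const C
  · refine Filter.Eventually.of_forall fun g => fun x hx => ?_
    exact (A g).hasFDerivAt.comp _ (((hud _).hasFDerivAt).comp x (cρ ρ g).hasFDerivAt)

lemma keyC (u : V → W) (hu : Continuous u)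
    (A : G → W →L[ℝ] W') (hA : Continuous A) (hA1 : ∀ g, ‖A g‖ ≤ 1) :
    Continuous fun x => ∫ g, A g (u (ρ g x)) ∂μ := by
  rw [continuous_iff_continuousAt]
  intro x₀
  obtain ⟨C, hC⟩ := (isCompact_closedBall (0 : V) (‖x₀‖ + 1)).exists_bound_of_continuousOn
    hu.continuousOn
  refine continuousAt_of_dominated (bound := fun _ => C) ?_ ?_ (integrable_const C) ?_
  · exact Filter.Eventually.of_forall fun x =>
      (hA.clm_apply (hu.comp (cont_apply ρ hρ x))).aestronglyMeasurable
  · refine Filter.eventually_of_mem (ball_mem_nhds x₀ one_pos) fun x hx => ?_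
    refine Filter.Eventually.of_forall fun g => ?_
    calc ‖A g (u (ρ g x))‖ ≤ ‖A g‖ * ‖u (ρ g x)‖ := (A g).le_opNorm _
      _ ≤ 1 * C := mul_le_mul (hA1 g) (hC _ (ball_bound ρ hx g)) (norm_nonneg _) zero_le_one
      _ = C := one_mul C
  · exact Filter.Eventually.of_forall fun g =>
      (((A g).continuous.comp (hu.comp (ρ g).continuous)).continuousAt)
end key

section B
variable {W W' : Type*} [NormedAddCommGroup W] [NormedSpace ℝ W] [FiniteDimensional ℝ W]
    [NormedAddCommGroup W'] [NormedSpace ℝ W'] [FiniteDimensional ℝ W']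

def Bop (A : G → W →L[ℝ] W') (g : G) : (V →L[ℝ] W) →L[ℝ] (V →L[ℝ] W') :=
  (ContinuousLinearMap.compL ℝ V W W' (A g)).comp
    ((ContinuousLinearMap.compL ℝ V V W).flip (cρ ρ g))

omit hρ in
lemma Bop_apply (A : G → W →L[ℝ] W') (g : G) (m : V →L[ℝ] W) :
    Bop ρ A g m = (A g).comp (m.comp (cρ ρ g)) := rfl

lemma Bop_cont {A : G → W →L[ℝ] W'} (hA : Continuous A) : Continuous (Bop ρ A) := by
  refine continuous_clm_apply.2 fun m => continuous_clm_apply.2 fun v => ?_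
  exact hA.clm_apply ((continuous_const (y := m)).clm_apply
    ((cρ_cont ρ hρ).clm_apply continuous_const))

omit hρ in
lemma Bop_norm {A : G → W →L[ℝ] W'} (hA1 : ∀ g, ‖A g‖ ≤ 1) (g : G) : ‖Bop ρ A g‖ ≤ 1 := by
  refine ContinuousLinearMap.opNorm_le_bound _ zero_le_one fun m => ?_
  rw [Bop_apply, one_mul]
  calc ‖(A g).comp (m.comp (cρ ρ g))‖ ≤ ‖A g‖ * ‖m.comp (cρ ρ g)‖ :=
        ContinuousLinearMap.opNorm_comp_le _ _
    _ ≤ 1 * (‖m‖ * 1) := by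
        refine mul_le_mul (hA1 g) ((ContinuousLinearMap.opNorm_comp_le _ _).trans ?_)
          (norm_nonneg _) zero_le_one
        exact mul_le_mul_of_nonneg_left (norm_cρ_le ρ g) (norm_nonneg _)
    _ = ‖m‖ := by ring
end B

lemma contDiff_aug (R : V → ℝ) (hR : ContDiff ℝ 3 R) : ContDiff ℝ 3 (augRisk μ ρ R) := by
  set u1 := fderiv ℝ R with hu1def
  set u2 := fderiv ℝ u1 with hu2def
  set u3 := fderiv ℝ u2 with hu3def
  have hu1 : ContDiff ℝ 2 u1 := hR.fderiv_right (by norm_num)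
  have hu2 : ContDiff ℝ 1 u2 := hu1.fderiv_right (by norm_num)
  have hu3 : Continuous u3 := hu2.continuous_fderiv one_ne_zero
  set A0 : G → ℝ →L[ℝ] ℝ := fun _ => ContinuousLinearMap.id ℝ ℝ with hA0def
  have hA0c : Continuous A0 := continuous_const
  have hA0n : ∀ g, ‖A0 g‖ ≤ 1 := fun g => ContinuousLinearMap.norm_id_le
  set A1 := Bop ρ A0 with hA1def
  set A2 := Bop ρ A1 with hA2def
  have hA1c : Continuous A1 := Bop_cont ρ hρ hA0c
  have hA1n : ∀ g, ‖A1 g‖ ≤ 1 := Bop_norm ρ hA0n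
  have hA2c : Continuous A2 := Bop_cont ρ hρ hA1c
  have hA2n : ∀ g, ‖A2 g‖ ≤ 1 := Bop_norm ρ hA1n
  have key0 : ∀ x₀, HasFDerivAt (augRisk μ ρ R)
      (∫ g, A1 g (u1 (ρ g x₀)) ∂μ) x₀ := fun x₀ =>
    key μ ρ hρ R (hR.of_le (by norm_num)) A0 hA0c hA0n x₀
  have key1 : ∀ x₀, HasFDerivAt (fun x => ∫ g, A1 g (u1 (ρ g x)) ∂μ)
      (∫ g, A2 g (u2 (ρ g x₀)) ∂μ) x₀ := fun x₀ =>
    key μ ρ hρ u1 (hu1.of_le (by norm_num)) A1 hA1c hA1n x₀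
  have key2 : ∀ x₀, HasFDerivAt (fun x => ∫ g, A2 g (u2 (ρ g x)) ∂μ)
      (∫ g, Bop ρ A2 g (u3 (ρ g x₀)) ∂μ) x₀ := fun x₀ =>
    key μ ρ hρ u2 hu2 A2 hA2c hA2n x₀
  have hfd1 : fderiv ℝ (augRisk μ ρ R) = fun x => ∫ g, A1 g (u1 (ρ g x)) ∂μ :=
    funext fun x => (key0 x).fderiv
  have hfd2 : fderiv ℝ (fun x => ∫ g, A1 g (u1 (ρ g x)) ∂μ)
      = fun x => ∫ g, A2 g (u2 (ρ g x)) ∂μ :=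
    funext fun x => (key1 x).fderiv
  rw [show (3 : WithTop ℕ∞) = 2 + 1 by norm_num]
  refine contDiff_succ_iff_fderiv.2 ⟨fun x => (key0 x).differentiableAt, by simp, ?_⟩
  rw [hfd1, show (2 : WithTop ℕ∞) = 1 + 1 by norm_num]
  refine contDiff_succ_iff_fderiv.2 ⟨fun x => (key1 x).differentiableAt, by simp, ?_⟩
  rw [hfd2, show (1 : WithTop ℕ∞) = 0 + 1 by norm_num]
  refine contDiff_succ_iff_fderiv.2 ⟨fun x => (key2 x).differentiableAt, by simp, ?_⟩
  letI : NormedAddCommGroup (V →L[ℝ] V →L[ℝ] ℝ) := inferInstance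
  letI : NormedSpace ℝ (V →L[ℝ] V →L[ℝ] ℝ) := inferInstance
  rw [funext fun x => (key2 x).fderiv, contDiff_zero]
  exact keyC μ ρ hρ u3 hu3 (Bop ρ A2) (Bop_cont ρ hρ hA2c) (Bop_norm ρ hA2n)

omit hρ in
lemma right_inv : μ.IsMulRightInvariant := by
  constructor
  intro h
  have : IsProbabilityMeasure (μ.map (· * h)) :=
    Measure.isProbabilityMeasure_map (measurable_mul_const h).aemeasurable
  exact Measure.isHaarMeasure_eq_of_isProbabilityMeasure (μ.map (· * h)) μ

omit hρ in
lemma aug_invariant (R : V → ℝ) (h : G) (x : V) :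
    augRisk μ ρ R (ρ h x) = augRisk μ ρ R x := by
  have := right_inv μ
  have h1 : ∀ g : G, R (ρ g (ρ h x)) = R (ρ (g * h) x) := by
    intro g
    rw [map_mul, LinearIsometryEquiv.coe_mul, Function.comp_apply]
  calc ∫ g, R (ρ g (ρ h x)) ∂μ = ∫ g, R (ρ (g * h) x) ∂μ := by simp_rw [h1]
    _ = ∫ g, R (ρ g x) ∂μ := integral_mul_right_eq_self (fun g => R (ρ g x)) h

lemma grad_equivariant (R : V → ℝ) (hR : ContDiff ℝ 3 R) (x : V)
    (hx : ∀ g : G, ρ g x = x) (h : G) :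
    ρ h (gradient (augRisk μ ρ R) x) = gradient (augRisk μ ρ R) x := by
  set F := augRisk μ ρ R with hF
  have hFd : Differentiable ℝ F := (contDiff_aug μ ρ hρ R hR).differentiable (by norm_num)
  set w := gradient F x with hw
  have key : ∀ v, ⟪w, v⟫_ℝ = fderiv ℝ F x v := by
    intro v
    simp only [hw, gradient]
    exact InnerProductSpace.toDual_symm_apply
  have hcomp : ∀ h' : G, F ∘ (ρ h') = F := fun h' => funext fun y => aug_invariant μ ρ R h' y
  have hfd : ∀ h' : G, ∀ v, fderiv ℝ F x (ρ h' v) = fderiv ℝ F x v := by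
    intro h' v
    have e1 : fderiv ℝ (F ∘ (ρ h')) x = (fderiv ℝ F (ρ h' x)).comp (cρ ρ h') := by
      have : HasFDerivAt (F ∘ (ρ h')) ((fderiv ℝ F (ρ h' x)).comp (cρ ρ h')) x :=
        (hFd (ρ h' x)).hasFDerivAt.comp x (cρ ρ h').hasFDerivAt
      exact this.fderiv
    have e2 : fderiv ℝ (F ∘ (ρ h')) x = fderiv ℝ F x := by rw [hcomp h']
    have Eq : fderiv ℝ F x = (fderiv ℝ F x).comp (cρ ρ h') := by
      have e3 := e1
      rw [e2, hx h'] at e3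
      exact e3
    exact (DFunLike.congr_fun Eq v).symm
  have main : ∀ h' : G, ρ h' w = w := by
    intro h'
    refine ext_inner_right ℝ fun v => ?_
    obtain ⟨u, hu⟩ : ∃ u, ρ h' u = v := ⟨(ρ h').symm v, (ρ h').apply_symm_apply v⟩
    rw [← hu, (ρ h').inner_map_map, key, key, hfd]
  exact main h

lemma grad_diff (R : V → ℝ) (hR : ContDiff ℝ 3 R) :
    Differentiable ℝ (gradient (augRisk μ ρ R)) := by
  have hFC3 := contDiff_aug μ ρ hρ R hR
  have hD1 : ContDiff ℝ 2 (fderiv ℝ (augRisk μ ρ R)) := hFC3.fderiv_right (by norm_num)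
  have : Differentiable ℝ (fderiv ℝ (augRisk μ ρ R)) := hD1.differentiable (by norm_num)
  exact fun x => (((dualIso V).toContinuousLinearEquiv.differentiable).differentiableAt).comp
    x (this x)

lemma hess_lips (R : V → ℝ) (hR : ContDiff ℝ 3 R) {M : ℝ}
    (hM : ∀ x, ‖iteratedFDeriv ℝ 3 (augRisk μ ρ R) x‖ ≤ M) (a b : V) :
    ‖fderiv ℝ (gradient (augRisk μ ρ R)) b - fderiv ℝ (gradient (augRisk μ ρ R)) a‖
      ≤ M * ‖b - a‖ := by
  set F := augRisk μ ρ R with hFdef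
  have hFC3 := contDiff_aug μ ρ hρ R hR
  set D1 := fderiv ℝ F with hD1def
  set D2 := fderiv ℝ D1 with hD2def
  have hD1 : ContDiff ℝ 2 D1 := hFC3.fderiv_right (by norm_num)
  have hD2 : ContDiff ℝ 1 D2 := hD1.fderiv_right (by norm_num)
  set eL : (V →L[ℝ] ℝ) →L[ℝ] V :=
    ((dualIso V).toContinuousLinearEquiv : (V →L[ℝ] ℝ) ≃L[ℝ] V).toContinuousLinearMap with heL
  have hgradrep : gradient F = fun x => eL (D1 x) := rfl
  have hder : ∀ x, HasFDerivAt (gradient F) (eL.comp (D2 x)) x := by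
    intro x
    rw [hgradrep]
    exact eL.hasFDerivAt.comp x ((hD1.differentiable (by norm_num) x).hasFDerivAt)
  have hhess : ∀ x, fderiv ℝ (gradient F) x = eL.comp (D2 x) := fun x => (hder x).fderiv
  have hnorm : ∀ m : V →L[ℝ] (V →L[ℝ] ℝ), ‖eL.comp m‖ = ‖m‖ := by
    intro m
    have happ : ∀ v, ‖eL (m v)‖ = ‖m v‖ := fun v => (dualIso V).norm_map (m v)
    refine le_antisymm (ContinuousLinearMap.opNorm_le_bound _ (norm_nonneg m) fun v => ?_)
      (ContinuousLinearMap.opNorm_le_bound _ (norm_nonneg _) fun v => ?_)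
    · rw [ContinuousLinearMap.comp_apply, happ v]; exact m.le_opNorm v
    · rw [← happ v]; exact (eL.comp m).le_opNorm v
  letI : NormedAddCommGroup (V →L[ℝ] V →L[ℝ] ℝ) := inferInstance
  letI : NormedSpace ℝ (V →L[ℝ] V →L[ℝ] ℝ) := inferInstance
  have hbound : ∀ x : V, ‖fderiv ℝ D2 x‖ ≤ M := by
    intro x
    have e0 : ‖fderiv ℝ D2 x‖ = ‖iteratedFDeriv ℝ 0 (fderiv ℝ D2) x‖ :=
      norm_iteratedFDeriv_zero.symm
    have e1 : ‖iteratedFDeriv ℝ 0 (fderiv ℝ D2) x‖ = ‖iteratedFDeriv ℝ 1 D2 x‖ :=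
      norm_iteratedFDeriv_fderiv
    have e2 : ‖iteratedFDeriv ℝ 1 D2 x‖ = ‖iteratedFDeriv ℝ 2 D1 x‖ := by
      rw [hD2def]; exact norm_iteratedFDeriv_fderiv
    have e3 : ‖iteratedFDeriv ℝ 2 D1 x‖ = ‖iteratedFDeriv ℝ 3 F x‖ := by
      rw [hD1def]; exact norm_iteratedFDeriv_fderiv
    rw [e0, e1, e2, e3]; exact hM x
  have hlip : ‖D2 b - D2 a‖ ≤ M * ‖b - a‖ := by
    refine Convex.norm_image_sub_le_of_norm_fderiv_le
      (fun x _ => (hD2.differentiable one_ne_zero x)) (fun x _ => hbound x) convex_univ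
      (Set.mem_univ a) (Set.mem_univ b)
  have : fderiv ℝ (gradient F) b - fderiv ℝ (gradient F) a = eL.comp (D2 b - D2 a) := by
    rw [hhess, hhess, ContinuousLinearMap.comp_sub]
  rw [this, hnorm]
  exact hlip

end AugSmooth

/-- Along the regularized augmented gradient flow, with
`Y(t) = Π_{Eᗮ} A(t)` and `α = (2/γ) R^aug(A(0)) + ‖Y(0)‖²`, one has
`(d/dt)(½‖Y(t)‖²) ≤ ((M/2)√α - σ - γ)‖Y(t)‖²` for all `t ≥ 0`. -/
theorem gronwall_condition
    {G V : Type*} [Group G] [TopologicalSpace G] [IsTopologicalGroup G] [CompactSpace G]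
    [MeasurableSpace G] [BorelSpace G]
    [NormedAddCommGroup V] [InnerProductSpace ℝ V] [FiniteDimensional ℝ V]
    (μ : Measure G) [μ.IsHaarMeasure] [IsProbabilityMeasure μ]
    (ρ : G →* (V ≃ₗᵢ[ℝ] V)) (hρ : Continuous fun p : G × V => ρ p.1 p.2)
    (L : Submodule ℝ V)
    (hcompat : (projSub L).comp (projSub (fixedSubmodule ρ)) =
      (projSub (fixedSubmodule ρ)).comp (projSub L))
    (R : V → ℝ) (hR : ContDiff ℝ 3 R)
    (hpos : ∀ A ∈ L, 0 ≤ augRisk μ ρ R A)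
    (σ : ℝ)
    (hσ : ∀ A ∈ fixedSubmodule ρ ⊓ L, ∀ Y ∈ L ⊓ (fixedSubmodule ρ ⊓ L)ᗮ,
      σ * ‖Y‖ ^ 2 ≤ ⟪(hess (augRisk μ ρ R) A) Y, Y⟫_ℝ)
    (M : ℝ) (hM : ∀ A : V, ‖iteratedFDeriv ℝ 3 (augRisk μ ρ R) A‖ ≤ M)
    (γ : ℝ) (hγ : 0 < γ)
    (A : ℝ → V)
    (hmem : ∀ t : ℝ, 0 ≤ t → A t ∈ L)
    (hode : ∀ t : ℝ, 0 ≤ t → HasDerivAt A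
      (-(projSub L (gradient (augRisk μ ρ R) (A t)))
        - γ • projSub (L ⊓ (fixedSubmodule ρ ⊓ L)ᗮ) (A t)) t) :
    ∀ t : ℝ, 0 ≤ t →
      deriv (fun s => (1 / 2) * ‖projSub (L ⊓ (fixedSubmodule ρ ⊓ L)ᗮ) (A s)‖ ^ 2) t ≤
        ((M / 2) * Real.sqrt ((2 / γ) * augRisk μ ρ R (A 0)
              + ‖projSub (L ⊓ (fixedSubmodule ρ ⊓ L)ᗮ) (A 0)‖ ^ 2)
            - σ - γ) * ‖projSub (L ⊓ (fixedSubmodule ρ ⊓ L)ᗮ) (A t)‖ ^ 2 := by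
  set F := augRisk μ ρ R with hFdef
  set E := fixedSubmodule ρ ⊓ L with hEdef
  set K := L ⊓ Eᗮ with hKdef
  set P : V →L[ℝ] V := projSub K with hPdef
  set gF := gradient F with hgFdef
  have hFC3 : ContDiff ℝ 3 F := contDiff_aug μ ρ hρ R hR
  have hFdiff : Differentiable ℝ F := hFC3.differentiable (by norm_num)
  have hgdiff : Differentiable ℝ gF := grad_diff μ ρ hρ R hR
  have hessd : ∀ x, HasFDerivAt gF (hess F x) x := fun x => (hgdiff x).hasFDerivAt
  have hM0 : (0 : ℝ) ≤ M := le_trans (norm_nonneg _) (hM 0)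
  have hlip : ∀ a b, ‖hess F b - hess F a‖ ≤ M * ‖b - a‖ := fun a b =>
    hess_lips μ ρ hρ R hR hM a b
  have htay : ∀ X Y : V, ‖gF (X + Y) - gF X - hess F X Y‖ ≤ M / 2 * ‖Y‖ ^ 2 :=
    fun X Y => taylor_bound' hessd hlip X Y
  -- the Lyapunov function
  have hKL' : ∀ x, projSub L (projSub K x) = projSub K x := fun x =>
    prAux.eq_self L (Submodule.mem_inf.1 (prAux.mem K x)).1
  set vc : ℝ → V := fun s => -(projSub L (gF (A s))) - γ • P (A s) with hvcdef
  set W : ℝ → ℝ := fun s => (2 / γ) * F (A s) + ⟪P (A s), P (A s)⟫_ℝ with hWdef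
  have hWd : ∀ t, 0 ≤ t → HasDerivAt W
      ((2 / γ) * ⟪gF (A t), vc t⟫_ℝ
        + (⟪P (A t), P (vc t)⟫_ℝ + ⟪P (vc t), P (A t)⟫_ℝ)) t := by
    intro t ht
    have hODE : HasDerivAt A (vc t) t := hode t ht
    have h1 : HasDerivAt (fun s => F (A s)) (fderiv ℝ F (A t) (vc t)) t :=
      (hFdiff (A t)).hasFDerivAt.comp_hasDerivAt t hODE
    have h1' : HasDerivAt (fun s => F (A s)) (⟪gF (A t), vc t⟫_ℝ) t := by
      rw [hgFdef, inner_gradient_eq_fderiv]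
      exact h1
    have hP2 : HasDerivAt (fun s => P (A s)) (P (vc t)) t :=
      P.hasFDerivAt.comp_hasDerivAt t hODE
    exact (h1'.const_mul (2 / γ)).add (hP2.inner ℝ hP2)
  have hWneg : ∀ s : ℝ,
      ((2 / γ) * ⟪gF (A s), vc s⟫_ℝ
        + (⟪P (A s), P (vc s)⟫_ℝ + ⟪P (vc s), P (A s)⟫_ℝ)) ≤ 0 := by
    intro s
    exact lyap_step L K hKL' hγ (gF (A s)) (A s)
  -- W is antitone, giving the a priori bound
  have hmono : ∀ t, 0 ≤ t → W t ≤ W 0 := by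
    have hanti : AntitoneOn W (Set.Ici 0) := by
      refine antitoneOn_of_deriv_nonpos (convex_Ici 0) ?_ ?_ ?_
      · exact fun s hs => ((hWd s hs).continuousAt).continuousWithinAt
      · intro s hs
        rw [interior_Ici] at hs
        exact ((hWd s hs.le).differentiableAt).differentiableWithinAt
      · intro s hs
        rw [interior_Ici] at hs
        rw [(hWd s hs.le).deriv]
        exact hWneg s
    exact fun t ht => hanti Set.self_mem_Ici ht ht
  set α : ℝ := (2 / γ) * F (A 0) + ‖P (A 0)‖ ^ 2 with hαdef
  have halpha : ∀ t, 0 ≤ t → ‖P (A t)‖ ≤ Real.sqrt α := by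
    intro t ht
    have hW0 : W 0 = α := by
      rw [hWdef, hαdef]
      simp [real_inner_self_eq_norm_sq]
    have hWt : ‖P (A t)‖ ^ 2 ≤ W t := by
      have hFpos : 0 ≤ F (A t) := hpos _ (hmem t ht)
      have h2 : (0 : ℝ) ≤ (2 / γ) * F (A t) := by positivity
      have heq : W t = (2 / γ) * F (A t) + ‖P (A t)‖ ^ 2 := by
        rw [hWdef]; simp [real_inner_self_eq_norm_sq]
      rw [heq]
      linarith [h2]
    have h1 : ‖P (A t)‖ ^ 2 ≤ α := by
      have := hmono t ht
      linarith [hW0 ▸ this]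
    have := Real.sqrt_le_sqrt h1
    rwa [Real.sqrt_sq (norm_nonneg _)] at this
  -- main estimate
  intro t ht
  have hode' := hode t ht
  set g := gF (A t) with hg
  set q := projSub L g with hq
  set y := P (A t) with hy
  set X := A t - y with hXdef
  have hXE : X ∈ E := mem_E_of_sub_proj (fixedSubmodule ρ) L (hmem t ht)
  have hXfix : ∀ g' : G, ρ g' X = X := fun g' => (Submodule.mem_inf.1 hXE).1 g'
  have hgXfix : ∀ g' : G, ρ g' (gF X) = gF X := fun g' =>
    grad_equivariant μ ρ hρ R hR X hXfix g'
  have hgXH : gF X ∈ fixedSubmodule ρ := hgXfix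
  have hyK : y ∈ K := prAux.mem K (A t)
  have horth : ⟪gF X, y⟫_ℝ = 0 := orth_HK (fixedSubmodule ρ) L hcompat hgXH hyK
  have hAt : X + y = A t := sub_add_cancel (A t) y
  set rem := g - gF X - hess F X y with hremdef
  have hrem : ‖rem‖ ≤ M / 2 * ‖y‖ ^ 2 := by
    have h := htay X y
    rw [hAt] at h
    exact h
  have hσ' : σ * ‖y‖ ^ 2 ≤ ⟪hess F X y, y⟫_ℝ := hσ X hXE y hyK
  -- compute the derivative in the goal
  have hPy' : P y = y := prAux.idem K (A t)
  have hinner' : ∀ a b : V, ⟪P a, b⟫_ℝ = ⟪a, P b⟫_ℝ := fun a b => prAux.inner_left K a b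
  have hfun : (fun s => (1 / 2 : ℝ) * ‖P (A s)‖ ^ 2)
      = fun s => (1 / 2 : ℝ) * ⟪P (A s), P (A s)⟫_ℝ := by
    funext s
    rw [real_inner_self_eq_norm_sq]
  have hPd : HasDerivAt (fun s => P (A s)) (P (-q - γ • y)) t :=
    P.hasFDerivAt.comp_hasDerivAt t hode'
  have h2 : HasDerivAt (fun s => (1 / 2 : ℝ) * ⟪P (A s), P (A s)⟫_ℝ)
      ((1 / 2 : ℝ) * (⟪P (A t), P (-q - γ • y)⟫_ℝ + ⟪P (-q - γ • y), P (A t)⟫_ℝ)) t :=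
    (hPd.inner ℝ hPd).const_mul (1 / 2 : ℝ)
  have hval : (1 / 2 : ℝ) * (⟪P (A t), P (-q - γ • y)⟫_ℝ + ⟪P (-q - γ • y), P (A t)⟫_ℝ)
      = ⟪-q - γ • y, y⟫_ℝ := by
    have e1 : ⟪P (-q - γ • y), P (A t)⟫_ℝ = ⟪-q - γ • y, P (A t)⟫_ℝ :=
      proj_inner_eq K (-q - γ • y) (A t)
    rw [e1, real_inner_comm (P (-q - γ • y)) (P (A t)), e1, ← hy]
    ring
  have hd : HasDerivAt (fun s => (1 / 2 : ℝ) * ‖P (A s)‖ ^ 2) (⟪-q - γ • y, y⟫_ℝ) t := by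
    rw [hfun, ← hval]
    exact h2
  rw [hd.deriv]
  -- bound the derivative
  have hgy : ⟪g, y⟫_ℝ = ⟪q, y⟫_ℝ := by
    rw [hq, prAux.inner_left L g y,
      prAux.eq_self L (Submodule.mem_inf.1 hyK).1]
  have hsplit : g = gF X + hess F X y + rem := by
    rw [hremdef]; abel
  have hgy2 : ⟪g, y⟫_ℝ = ⟪hess F X y, y⟫_ℝ + ⟪rem, y⟫_ℝ := by
    conv_lhs => rw [hsplit]
    rw [inner_add_left, inner_add_left, horth]
    ring
  have expand : ⟪-q - γ • y, y⟫_ℝ = -⟪q, y⟫_ℝ - γ * ⟪y, y⟫_ℝ := by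
    rw [inner_sub_left, inner_neg_left, real_inner_smul_left]
  rw [expand, ← hgy, hgy2, real_inner_self_eq_norm_sq]
  have h1 : -⟪rem, y⟫_ℝ ≤ ‖rem‖ * ‖y‖ :=
    (neg_le_abs _).trans (abs_real_inner_le_norm rem y)
  have h2 : ‖rem‖ * ‖y‖ ≤ (M / 2 * ‖y‖ ^ 2) * ‖y‖ :=
    mul_le_mul_of_nonneg_right hrem (norm_nonneg y)
  have h3 : (M / 2 * ‖y‖ ^ 2) * ‖y‖ ≤ (M / 2 * ‖y‖ ^ 2) * Real.sqrt α := by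
    refine mul_le_mul_of_nonneg_left (halpha t ht) ?_
    positivity
  have h4 : (M / 2 * ‖y‖ ^ 2) * Real.sqrt α = (M / 2 * Real.sqrt α) * ‖y‖ ^ 2 := by ring
  nlinarith [hσ', h1, h2, h3]
end
end
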